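/- Let f:[0,∞)→[0,∞) be locally Lipschitz, convex, with f(0)=0 and f(u)>0 for u>0, satisfying ∫₁^∞ du/f(u) < ∞ and lim_{u→∞} f(u)/u = +∞. Fix λ>0 and set s₀(λ) := inf{u>0 : f(u)/u > λ}. If y:[0,T*)→ℝ is C¹, satisfies y'(t)+λ y(t) ≥ f(y(t)) with y(0)=y₀ > s₀(λ), and [0,T*) is its maximal interval of existence, then T* < ∞ and y(t) → +∞ as t → T*. Moreover, with c := 1 - λy₀/f(y₀) ∈ (0,1), one has T* ≤ (1/c)∫_{y₀}^∞ du/f(u). -/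

import Mathlib

open Filter Set Topology
open scoped ENNReal

/-- Blow-up for the ODE inequality `y' + λ y ≥ f(y)`, `y(0) = y₀ > s₀(λ)`,
where `f` is locally Lipschitz, convex, vanishes at `0`, is positive on
`(0,∞)`, superlinear, and satisfies the Osgood condition.  Maximality of the
interval of existence `[0,T*)` is expressed by the standard dichotomy: either
`T* = ∞` or `y` tends to `+∞` at `T*`.  The conclusion: `T* < ∞`, `y` blows up
at `T*`, `c := 1 - λ y₀ / f(y₀) ∈ (0,1)`, and
`T* ≤ (1/c) ∫_{y₀}^∞ du / f(u)`. -/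
theorem ode_blow_up (f : ℝ → ℝ)
    (hlip : ∀ x ∈ Ici (0 : ℝ), ∃ K : NNReal, ∃ t ∈ nhdsWithin x (Ici (0 : ℝ)),
      LipschitzOnWith K f t)
    (hconv : ConvexOn ℝ (Ici (0 : ℝ)) f)
    (hf0 : f 0 = 0) (hfpos : ∀ u : ℝ, 0 < u → 0 < f u)
    (hosgood : MeasureTheory.IntegrableOn (fun u => 1 / f u) (Ici (1 : ℝ)))
    (hsuper : Tendsto (fun u => f u / u) atTop atTop)
    (lam : ℝ) (hlam : 0 < lam)
    (s₀ : ℝ) (hs₀ : s₀ = sInf {u : ℝ | 0 < u ∧ lam < f u / u})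
    (Tstar : ℝ≥0∞) (hT : 0 < Tstar)
    (y : ℝ → ℝ) (y₀ : ℝ) (hy0 : y 0 = y₀)
    (hy0pos : 0 < y₀) (hy0big : s₀ < y₀)
    (hy : ∀ t : ℝ, 0 ≤ t → (ENNReal.ofReal t) < Tstar →
      HasDerivAt y (deriv y t) t ∧ f (y t) ≤ deriv y t + lam * y t)
    (hmax : Tstar = ⊤ ∨
      Tendsto y (nhdsWithin Tstar.toReal (Iio Tstar.toReal)) atTop) :
    Tstar < ⊤ ∧
    Tendsto y (nhdsWithin Tstar.toReal (Iio Tstar.toReal)) atTop ∧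
    (0 < 1 - lam * y₀ / f y₀ ∧ 1 - lam * y₀ / f y₀ < 1) ∧
    Tstar.toReal ≤ (1 / (1 - lam * y₀ / f y₀)) * ∫ u in Ici y₀, 1 / f u := by
  have hfy₀ : 0 < f y₀ := hfpos _ hy0pos
  set c : ℝ := 1 - lam * y₀ / f y₀ with hc_def
  -- continuity of f on (0,∞)
  have fcont : ∀ x : ℝ, 0 < x → ContinuousAt f x := by
    intro x hx
    obtain ⟨K, t, ht, hK⟩ := hlip x hx.le
    have hnt : t ∈ 𝓝 x := by
      rwa [nhdsWithin_eq_nhds.2 (Ici_mem_nhds hx)] at ht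
    exact (hK.continuousOn x (mem_of_mem_nhds hnt)).continuousAt hnt
  -- multiplicative slope monotonicity
  have slope : ∀ a b : ℝ, 0 < a → a ≤ b → f a * b ≤ f b * a := by
    intro a b ha hab
    have hb : 0 < b := ha.trans_le hab
    have hw1 : (0:ℝ) ≤ 1 - a / b := by
      have : a / b ≤ 1 := (div_le_one hb).2 hab
      linarith
    have hw2 : (0:ℝ) ≤ a / b := div_nonneg ha.le hb.le
    have h1 := hconv.2 (self_mem_Ici) (show b ∈ Ici (0:ℝ) from hb.le) hw1 hw2 (by ring)
    simp only [smul_eq_mul, mul_zero, zero_add, hf0] at h1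
    rw [div_mul_cancel₀ a (ne_of_gt hb)] at h1
    -- h1 : f a ≤ (1 - a/b) * 0 + a/b * f b
    have h2 : f a ≤ a / b * f b := by linarith [h1]
    have h3 := mul_le_mul_of_nonneg_right h2 hb.le
    calc f a * b ≤ a / b * f b * b := h3
      _ = f b * a := by field_simp
  -- a point u ∈ S below y₀
  have hSne : {u : ℝ | 0 < u ∧ lam < f u / u}.Nonempty := by
    obtain ⟨v, hv⟩ := ((hsuper.eventually_gt_atTop lam).and (eventually_ge_atTop (1:ℝ))).exists
    exact ⟨v, lt_of_lt_of_le one_pos hv.2, hv.1⟩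
  obtain ⟨u, huS, huy₀⟩ : ∃ u ∈ {u : ℝ | 0 < u ∧ lam < f u / u}, u < y₀ := by
    apply exists_lt_of_csInf_lt hSne
    rwa [← hs₀]
  obtain ⟨hupos, hulam⟩ := huS
  -- key : λ v ≤ f v for v ≥ u
  have key : ∀ v : ℝ, u ≤ v → lam * v ≤ f v := by
    intro v hv
    have hvpos : 0 < v := hupos.trans_le hv
    have hsl := slope u v hupos hv
    have h1 : lam < f v / v := by
      refine hulam.trans_le ?_
      rw [div_le_div_iff₀ hupos hvpos]
      linarith [hsl]
    exact ((lt_div_iff₀ hvpos).1 h1).le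
  -- c ∈ (0,1)
  have hlamy₀ : lam * y₀ < f y₀ := by
    have h1 : lam < f y₀ / y₀ := by
      refine hulam.trans_le ?_
      rw [div_le_div_iff₀ hupos hy0pos]
      linarith [slope u y₀ hupos huy₀.le]
    exact (lt_div_iff₀ hy0pos).1 h1
  have hc0 : 0 < c := by
    have : lam * y₀ / f y₀ < 1 := (div_lt_one hfy₀).2 hlamy₀
    simp only [hc_def]; linarith
  have hc1 : c < 1 := by
    have : 0 < lam * y₀ / f y₀ := div_pos (mul_pos hlam hy0pos) hfy₀
    simp only [hc_def]; linarith
  -- key2 : c * f v ≤ f v - λ v for v ≥ y₀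
  have key2 : ∀ v : ℝ, y₀ ≤ v → c * f v ≤ f v - lam * v := by
    intro v hv
    have hsl := slope y₀ v hy0pos hv
    have h1 : lam * v * f y₀ ≤ lam * y₀ * f v := by nlinarith [hlam.le]
    have h2 : lam * v ≤ lam * y₀ / f y₀ * f v := by
      rw [div_mul_eq_mul_div, le_div_iff₀ hfy₀]
      linarith
    simp only [hc_def]
    have h3 : (1 - lam * y₀ / f y₀) * f v = f v - lam * y₀ / f y₀ * f v := by ring
    linarith
  -- membership in the domain is downward closed
  have hdcl : ∀ t s : ℝ, ENNReal.ofReal t < Tstar → 0 ≤ s → s ≤ t →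
      0 ≤ s ∧ ENNReal.ofReal s < Tstar := fun t s ht hs hst =>
    ⟨hs, lt_of_le_of_lt (ENNReal.ofReal_le_ofReal hst) ht⟩
  -- continuity of y on [0,t]
  have ycont : ∀ t : ℝ, ENNReal.ofReal t < Tstar → ContinuousOn y (Icc 0 t) := by
    intro t ht s hs
    obtain ⟨h1, h2⟩ := hdcl t s ht hs.1 hs.2
    exact ((hy s h1 h2).1.continuousAt).continuousWithinAt
  -- invariance : y t ≥ u
  have claim1 : ∀ t : ℝ, 0 ≤ t → ENNReal.ofReal t < Tstar → u ≤ y t := by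
    intro t₂ ht₂ hlt₂
    by_contra h
    push_neg at h
    set S2 : Set ℝ := Icc 0 t₂ ∩ y ⁻¹' Iic u with hS2
    have hS2ne : S2.Nonempty := ⟨t₂, ⟨ht₂, le_refl _⟩, h.le⟩
    have hS2bdd : BddBelow S2 := ⟨0, fun s hs => hs.1.1⟩
    have hS2cl : IsClosed S2 :=
      (ycont t₂ hlt₂).preimage_isClosed_of_isClosed isClosed_Icc isClosed_Iic
    set t₁ := sInf S2 with ht₁def
    have ht₁S : t₁ ∈ S2 := hS2cl.csInf_mem hS2ne hS2bdd
    have ht₁0 : 0 ≤ t₁ := ht₁S.1.1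
    have ht₁t₂ : t₁ ≤ t₂ := ht₁S.1.2
    have hyt₁ : y t₁ ≤ u := ht₁S.2
    -- y ≥ u on [0, t₁)
    have hbig : ∀ s : ℝ, 0 ≤ s → s < t₁ → u < y s := by
      intro s hs hst₁
      by_contra h2
      push_neg at h2
      exact absurd (csInf_le hS2bdd ⟨⟨hs, hst₁.le.trans ht₁t₂⟩, h2⟩) (not_le.2 hst₁)
    have hmono : MonotoneOn y (Icc 0 t₁) := by
      apply monotoneOn_of_deriv_nonneg (convex_Icc 0 t₁)
      · exact (ycont t₂ hlt₂).mono (Icc_subset_Icc le_rfl ht₁t₂)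
      · rw [interior_Icc]
        intro s hs
        obtain ⟨hd1, hd2⟩ := hdcl t₂ s hlt₂ hs.1.le (hs.2.le.trans ht₁t₂)
        exact ((hy s hd1 hd2).1.differentiableAt).differentiableWithinAt
      · rw [interior_Icc]
        intro s hs
        obtain ⟨hd1, hd2⟩ := hdcl t₂ s hlt₂ hs.1.le (hs.2.le.trans ht₁t₂)
        have hderiv := (hy s hd1 hd2).2
        have hyb := hbig s hs.1.le hs.2
        have := key (y s) hyb.le
        linarith
    have : y₀ ≤ y t₁ := by
      have := hmono (left_mem_Icc.2 ht₁0) (right_mem_Icc.2 ht₁0) ht₁0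
      rwa [hy0] at this
    linarith
  -- y t ≥ y₀ on the domain
  have claim2 : ∀ t : ℝ, 0 ≤ t → ENNReal.ofReal t < Tstar → y₀ ≤ y t := by
    intro t ht hlt
    have hmono : MonotoneOn y (Icc 0 t) := by
      apply monotoneOn_of_deriv_nonneg (convex_Icc 0 t)
      · exact ycont t hlt
      · rw [interior_Icc]
        intro s hs
        obtain ⟨hd1, hd2⟩ := hdcl t s hlt hs.1.le hs.2.le
        exact ((hy s hd1 hd2).1.differentiableAt).differentiableWithinAt
      · rw [interior_Icc]
        intro s hs
        obtain ⟨hd1, hd2⟩ := hdcl t s hlt hs.1.le hs.2.le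
        have hderiv := (hy s hd1 hd2).2
        have := key (y s) (claim1 s hd1 hd2)
        linarith
    have := hmono (left_mem_Icc.2 ht) (right_mem_Icc.2 ht) ht
    rwa [hy0] at this
  -- continuity of 1/f on (0,∞)
  have hcont1f : ∀ x : ℝ, 0 < x → ContinuousAt (fun u => 1 / f u) x := by
    intro x hx
    exact continuousAt_const.div (fcont x hx) (ne_of_gt (hfpos x hx))
  -- integrability of 1/f on [y₀,∞)
  have hIint : MeasureTheory.IntegrableOn (fun u => 1 / f u) (Ici y₀) := by
    have h1 : MeasureTheory.IntegrableOn (fun u => 1 / f u) (Icc y₀ 1) := by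
      apply ContinuousOn.integrableOn_Icc
      intro x hx
      exact (hcont1f x (lt_of_lt_of_le hy0pos hx.1)).continuousWithinAt
    have hsub : Ici y₀ ⊆ Icc y₀ 1 ∪ Ici 1 := by
      intro x hx
      rcases le_total x 1 with h | h
      · exact Or.inl ⟨hx, h⟩
      · exact Or.inr h
    exact (h1.union hosgood).mono_set hsub
  set F : ℝ → ℝ := fun v => ∫ x in y₀..v, 1 / f x with hF_def
  have hFderiv : ∀ v : ℝ, y₀ ≤ v → HasDerivAt F (1 / f v) v := by
    intro v hv
    have hvpos : 0 < v := lt_of_lt_of_le hy0pos hv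
    have hint : IntervalIntegrable (fun u => 1 / f u) MeasureTheory.volume y₀ v := by
      rw [intervalIntegrable_iff]
      apply hIint.mono_set
      rw [uIoc_of_le hv]
      exact Ioc_subset_Ioi_self.trans Ioi_subset_Ici_self
    have hmeas := ContinuousAt.stronglyMeasurableAtFilter (μ := MeasureTheory.volume) isOpen_Ioi
      (fun x hx => hcont1f x hx) v hvpos
    exact intervalIntegral.integral_hasDerivAt_right hint hmeas (hcont1f v hvpos)
  -- lower bound : c t ≤ F (y t)
  have claim3 : ∀ t : ℝ, 0 ≤ t → ENNReal.ofReal t < Tstar → c * t ≤ F (y t) := by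
    intro t ht hlt
    set G : ℝ → ℝ := fun s => F (y s) - c * s with hG_def
    have hGderiv : ∀ s : ℝ, 0 ≤ s → ENNReal.ofReal s < Tstar →
        HasDerivAt G (1 / f (y s) * deriv y s - c) s := by
      intro s h1 h2
      have hcomp : HasDerivAt (fun s => F (y s)) (1 / f (y s) * deriv y s) s :=
        (hFderiv (y s) (claim2 s h1 h2)).comp s (hy s h1 h2).1
      have h := hcomp.sub ((hasDerivAt_id s).const_mul c)
      simp only [id, mul_one] at h
      exact h
    have hGnonneg : ∀ s : ℝ, 0 ≤ s → ENNReal.ofReal s < Tstar →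
        0 ≤ 1 / f (y s) * deriv y s - c := by
      intro s h1 h2
      have hys : y₀ ≤ y s := claim2 s h1 h2
      have hfys : 0 < f (y s) := hfpos _ (hy0pos.trans_le hys)
      have h3 := key2 (y s) hys
      have h4 := (hy s h1 h2).2
      have h5 : c * f (y s) ≤ deriv y s := by linarith
      have : c ≤ deriv y s / f (y s) := (le_div_iff₀ hfys).2 (by linarith)
      rw [one_div_mul_eq_div]
      linarith
    have hmono : MonotoneOn G (Icc 0 t) := by
      apply monotoneOn_of_deriv_nonneg (convex_Icc 0 t)
      · intro s hs
        obtain ⟨h1, h2⟩ := hdcl t s hlt hs.1 hs.2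
        exact ((hGderiv s h1 h2).continuousAt).continuousWithinAt
      · rw [interior_Icc]
        intro s hs
        obtain ⟨h1, h2⟩ := hdcl t s hlt hs.1.le hs.2.le
        exact ((hGderiv s h1 h2).differentiableAt).differentiableWithinAt
      · rw [interior_Icc]
        intro s hs
        obtain ⟨h1, h2⟩ := hdcl t s hlt hs.1.le hs.2.le
        rw [(hGderiv s h1 h2).deriv]
        exact hGnonneg s h1 h2
    have hG0 : G 0 = 0 := by
      simp only [hG_def, hy0, mul_zero, sub_zero, hF_def, intervalIntegral.integral_same]
    have := hmono (left_mem_Icc.2 ht) (right_mem_Icc.2 ht) ht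
    rw [hG0] at this
    simp only [hG_def] at this
    linarith
  set I : ℝ := ∫ u in Ici y₀, 1 / f u with hI_def
  have hInonneg : 0 ≤ I := by
    apply MeasureTheory.setIntegral_nonneg measurableSet_Ici
    intro x hx
    exact (one_div_nonneg).2 (hfpos x (hy0pos.trans_le hx)).le
  -- upper bound : F (y t) ≤ I
  have claim4 : ∀ t : ℝ, 0 ≤ t → ENNReal.ofReal t < Tstar → F (y t) ≤ I := by
    intro t h1 h2
    have hys : y₀ ≤ y t := claim2 t h1 h2
    have hFeq : F (y t) = ∫ x in Set.Ioc y₀ (y t), 1 / f x :=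
      intervalIntegral.integral_of_le hys
    rw [hFeq]
    apply MeasureTheory.setIntegral_mono_set hIint
    · apply (MeasureTheory.ae_restrict_iff' measurableSet_Ici).2
      exact MeasureTheory.ae_of_all _ fun x hx =>
        (one_div_nonneg).2 (hfpos x (hy0pos.trans_le hx)).le
    · exact HasSubset.Subset.eventuallyLE (Ioc_subset_Ioi_self.trans Ioi_subset_Ici_self)
  -- the time bound on the domain
  have claim5 : ∀ t : ℝ, 0 ≤ t → ENNReal.ofReal t < Tstar → t ≤ 1 / c * I := by
    intro t h1 h2
    have := (claim3 t h1 h2).trans (claim4 t h1 h2)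
    rw [one_div_mul_eq_div, le_div_iff₀ hc0]
    linarith
  -- Tstar is finite
  have hfin : Tstar ≠ ⊤ := by
    intro htop
    have h1 : (0:ℝ) ≤ 1 / c * I + 1 := by positivity
    have h2 : ENNReal.ofReal (1 / c * I + 1) < Tstar := by
      rw [htop]; exact ENNReal.ofReal_lt_top
    have := claim5 _ h1 h2
    linarith
  have hblow : Tendsto y (nhdsWithin Tstar.toReal (Iio Tstar.toReal)) atTop :=
    hmax.resolve_left hfin
  refine ⟨lt_top_iff_ne_top.2 hfin, hblow, ⟨hc0, hc1⟩, ?_⟩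
  by_contra h
  push_neg at h
  set t : ℝ := (1 / c * I + Tstar.toReal) / 2 with ht_def
  have htpos : 0 ≤ t := by
    have := ENNReal.toReal_nonneg (a := Tstar)
    have h2 : 0 ≤ 1 / c * I := by positivity
    simp only [ht_def]; linarith
  have htlt : t < Tstar.toReal := by simp only [ht_def]; linarith
  have hofr : ENNReal.ofReal t < Tstar := by
    rwa [ENNReal.ofReal_lt_iff_lt_toReal htpos hfin]
  have := claim5 t htpos hofr
  simp only [ht_def] at this
  linarith
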